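/- Let Ω be a perturbed double complex with Ω_{p,q} = b₁ ⊕ D₀ and Ω_{p+1,q} = b₂ ⊕ E₀, where the b₁-to-b₂ component φ of d⁰ : Ω_{p,q} → Ω_{p+1,q} is an isomorphism. Then the family obtained by replacing Ω_{p,q} by D₀, Ω_{p+1,q} by E₀, and correcting each morphism d^{i+j} : Ω_{p+j,q−j} → Ω_{p−i+1,q+i} to d^{i+j} − γᵢφ⁻¹δⱼ (where γᵢ is the component of dⁱ out of b₁ and δⱼ is the component of d^j into b₂, with the boundary morphisms truncated as in Gaussian elimination) is again a perturbed double complex whose total complex is homotopy equivalent to Tot(Ω). -/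

import Mathlib

open DirectSum

noncomputable section

/-- The `(pq, pq')` component of an endomorphism of the total module `⊕_{p,q} Ω_{p,q}`. -/
def entryMap (R : Type) [CommRing R] (M : ℤ × ℤ → Type)
    [∀ pq, AddCommGroup (M pq)] [∀ pq, Module R (M pq)]
    (f : Module.End R (⨁ pq, M pq)) (pq pq' : ℤ × ℤ) : M pq →ₗ[R] M pq' :=
  (DirectSum.component R (ℤ × ℤ) M pq') ∘ₗ f ∘ₗ DirectSum.lof R (ℤ × ℤ) M pq

section GaussianData

variable (R : Type) [CommRing R] (M : ℤ × ℤ → Type)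
  [∀ pq, AddCommGroup (M pq)] [∀ pq, Module R (M pq)]
  (p₀ q₀ : ℤ)
  (b₁ D₀ b₂ E₀ : Type)
  [AddCommGroup b₁] [Module R b₁] [AddCommGroup D₀] [Module R D₀]
  [AddCommGroup b₂] [Module R b₂] [AddCommGroup E₀] [Module R E₀]
  (e₁ : M (p₀, q₀) ≃ₗ[R] b₁ × D₀) (e₂ : M (p₀ + 1, q₀) ≃ₗ[R] b₂ × E₀)
  (d : ℕ → Module.End R (⨁ pq, M pq))

/-- `γᵢ`: the component of `dⁱ` out of the summand `b₁` of `Ω_{p₀,q₀}`. -/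
def gam (i : ℕ) : b₁ →ₗ[R] M (p₀ - (i : ℤ) + 1, q₀ + (i : ℤ)) :=
  entryMap R M (d i) (p₀, q₀) (p₀ - (i : ℤ) + 1, q₀ + (i : ℤ)) ∘ₗ
    e₁.symm.toLinearMap ∘ₗ LinearMap.inl R b₁ D₀

/-- `δⱼ`: the component of `d^j` into the summand `b₂` of `Ω_{p₀+1,q₀}`. -/
def del (j : ℕ) : M (p₀ + (j : ℤ), q₀ - (j : ℤ)) →ₗ[R] b₂ :=
  LinearMap.fst R b₂ E₀ ∘ₗ e₂.toLinearMap ∘ₗ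
    entryMap R M (d j) (p₀ + (j : ℤ), q₀ - (j : ℤ)) (p₀ + 1, q₀)

/-- `γ₀`: the `b₁ → E₀` component of `d⁰`. -/
def gam0 : b₁ →ₗ[R] E₀ :=
  LinearMap.snd R b₂ E₀ ∘ₗ e₂.toLinearMap ∘ₗ
    entryMap R M (d 0) (p₀, q₀) (p₀ + 1, q₀) ∘ₗ e₁.symm.toLinearMap ∘ₗ LinearMap.inl R b₁ D₀

/-- `δ₀`: the `D₀ → b₂` component of `d⁰`. -/
def del0 : D₀ →ₗ[R] b₂ :=
  LinearMap.fst R b₂ E₀ ∘ₗ e₂.toLinearMap ∘ₗ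
    entryMap R M (d 0) (p₀, q₀) (p₀ + 1, q₀) ∘ₗ e₁.symm.toLinearMap ∘ₗ LinearMap.inr R b₁ D₀

/-- `ε₀₀`: the `D₀ → E₀` component of `d⁰`. -/
def eps00 : D₀ →ₗ[R] E₀ :=
  LinearMap.snd R b₂ E₀ ∘ₗ e₂.toLinearMap ∘ₗ
    entryMap R M (d 0) (p₀, q₀) (p₀ + 1, q₀) ∘ₗ e₁.symm.toLinearMap ∘ₗ LinearMap.inr R b₁ D₀

/-- `ε_{i0}`: the component of `dⁱ` out of the summand `D₀` of `Ω_{p₀,q₀}`. -/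
def epsOut (i : ℕ) : D₀ →ₗ[R] M (p₀ - (i : ℤ) + 1, q₀ + (i : ℤ)) :=
  entryMap R M (d i) (p₀, q₀) (p₀ - (i : ℤ) + 1, q₀ + (i : ℤ)) ∘ₗ
    e₁.symm.toLinearMap ∘ₗ LinearMap.inr R b₁ D₀

/-- `ε_{0j}`: the component of `d^j` into the summand `E₀` of `Ω_{p₀+1,q₀}`. -/
def epsIn (j : ℕ) : M (p₀ + (j : ℤ), q₀ - (j : ℤ)) →ₗ[R] E₀ :=
  LinearMap.snd R b₂ E₀ ∘ₗ e₂.toLinearMap ∘ₗ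
    entryMap R M (d j) (p₀ + (j : ℤ), q₀ - (j : ℤ)) (p₀ + 1, q₀)

/-- `βⱼ`: the component of `d^j` into the summand `D₀` of `Ω_{p₀,q₀}`. -/
def beta (j : ℕ) : M (p₀ + (j : ℤ) - 1, q₀ - (j : ℤ)) →ₗ[R] D₀ :=
  LinearMap.snd R b₁ D₀ ∘ₗ e₁.toLinearMap ∘ₗ
    entryMap R M (d j) (p₀ + (j : ℤ) - 1, q₀ - (j : ℤ)) (p₀, q₀)

/-- `νᵢ`: the component of `dⁱ` out of the summand `E₀` of `Ω_{p₀+1,q₀}`. -/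
def nu (i : ℕ) : E₀ →ₗ[R] M (p₀ + 1 - (i : ℤ) + 1, q₀ + (i : ℤ)) :=
  entryMap R M (d i) (p₀ + 1, q₀) (p₀ + 1 - (i : ℤ) + 1, q₀ + (i : ℤ)) ∘ₗ
    e₂.symm.toLinearMap ∘ₗ LinearMap.inr R b₂ E₀

end GaussianData


open Finset

namespace GaussAux

section Generic

variable {R : Type} [CommRing R] {M : ℤ × ℤ → Type}
  [∀ pq, AddCommGroup (M pq)] [∀ pq, Module R (M pq)]

lemma lof_range_component {t t' : ℤ × ℤ} (h : t ≠ t') {y : ⨁ pq, M pq}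
    (hy : y ∈ LinearMap.range (lof R (ℤ × ℤ) M t)) :
    component R (ℤ × ℤ) M t' y = 0 := by
  obtain ⟨z, rfl⟩ := hy
  rw [component.of, dif_neg h]

lemma eq_lof_component {t : ℤ × ℤ} {y : ⨁ pq, M pq}
    (hy : y ∈ LinearMap.range (lof R (ℤ × ℤ) M t)) :
    y = lof R (ℤ × ℤ) M t (component R (ℤ × ℤ) M t y) := by
  obtain ⟨z, rfl⟩ := hy
  rw [component.lof_self]

lemma slot_separation {n : ℕ} {s : ℕ → ℤ × ℤ} (hs : Function.Injective s)
    {x : ℕ → ⨁ pq, M pq} (hx : ∀ k, x k ∈ LinearMap.range (lof R (ℤ × ℤ) M (s k)))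
    (h0 : ∑ k ∈ range n, x k = 0) : ∀ k < n, x k = 0 := by
  intro k hk
  have hc := congrArg (component R (ℤ × ℤ) M (s k)) h0
  rw [map_sum, map_zero, Finset.sum_eq_single k
    (fun j _ hne => lof_range_component (fun h => hne (hs h)) (hx j))
    (fun h => absurd (mem_range.mpr hk) h)] at hc
  rw [eq_lof_component (hx k), hc, map_zero]

lemma triangle {A : Type} [AddCommGroup A] (n : ℕ) (f : ℕ → ℕ → A)
    (hv : ∀ i j, n ≤ i + j → f i j = 0) :
    ∑ i ∈ range n, ∑ j ∈ range n, f i j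
      = ∑ k ∈ range n, ∑ a ∈ range (k + 1), f a (k - a) := by
  rw [Finset.sum_range_diag_flip]
  refine Finset.sum_congr rfl fun m hm => (Finset.sum_subset ?_ ?_).symm
  · intro j hj; rw [mem_range] at *; omega
  · intro j hj hj2; apply hv; rw [mem_range] at *; omega

variable (d : ℕ → Module.End R (⨁ pq, M pq))

/-- `∑_{i+j=k} dⁱ ∘ dʲ`. -/
def sqSum (k : ℕ) : Module.End R (⨁ pq, M pq) :=
  ∑ i ∈ Finset.range (k + 1), d i ∘ₗ d (k - i)

/-- candidate total differential -/
def DtotOf (N : ℤ × ℤ → ℕ) : Module.End R (⨁ pq, M pq) :=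
  DirectSum.toModule R (ℤ × ℤ) _ fun pq =>
    (∑ i ∈ range (N pq), d i) ∘ₗ lof R (ℤ × ℤ) M pq

variable {d}

variable {N : ℤ × ℤ → ℕ}
  (hvan : ∀ pq, ∀ i, N pq ≤ i → ∀ x : M pq, d i (lof R (ℤ × ℤ) M pq x) = 0)

include hvan in
lemma DtotOf_lof (pq : ℤ × ℤ) (x : M pq) {N' : ℕ} (hN' : N pq ≤ N') :
    DtotOf d N (lof R (ℤ × ℤ) M pq x)
      = ∑ i ∈ range N', d i (lof R (ℤ × ℤ) M pq x) := by
  rw [DtotOf, DirectSum.toModule_lof]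
  simp only [LinearMap.comp_apply, LinearMap.sum_apply]
  exact Finset.sum_subset (Finset.range_subset_range.mpr hN')
    (fun i _ hi => hvan pq i (by rw [mem_range] at hi; omega) x)

variable
  (hgr : ∀ (i : ℕ) (p q : ℤ) (x : M (p, q)),
      d i (DirectSum.lof R (ℤ × ℤ) M (p, q) x) ∈
        LinearMap.range (DirectSum.lof R (ℤ × ℤ) M (p - (i : ℤ) + 1, q + (i : ℤ))))
  {Dt : Module.End R (⨁ pq, M pq)}
  (htot : ∀ (pq : ℤ × ℤ) (x : M pq) (N' : ℕ), N pq ≤ N' →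
    Dt (lof R (ℤ × ℤ) M pq x) = ∑ i ∈ range N', d i (lof R (ℤ × ℤ) M pq x))

include hvan hgr htot in
lemma core (p q : ℤ) (x : M (p, q)) :
    ∃ C : ℕ, (∀ i j : ℕ, C ≤ i + j → d j (d i (lof R (ℤ × ℤ) M (p, q) x)) = 0) ∧
      ∀ C' ≥ C, Dt (Dt (lof R (ℤ × ℤ) M (p, q) x))
        = ∑ k ∈ range C', sqSum d k (lof R (ℤ × ℤ) M (p, q) x) := by
  classical
  set A := N (p, q) with hA
  set B := (range A).sup (fun m => N (p - (m : ℤ) + 1, q + (m : ℤ))) with hB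
  refine ⟨A + B, ?_, ?_⟩
  · intro i j hij
    by_cases hi : A ≤ i
    · rw [hvan _ i hi, map_zero]
    · have hle : N (p - (i : ℤ) + 1, q + (i : ℤ)) ≤ B :=
        Finset.le_sup (f := fun m : ℕ => N (p - (m : ℤ) + 1, q + (m : ℤ)))
          (mem_range.mpr (by omega))
      obtain ⟨z, hz⟩ := hgr i p q x
      rw [← hz]
      exact hvan _ j (by omega) z
  · intro C' hC'
    have hstep : ∀ m ∈ range C', Dt (d m (lof R (ℤ × ℤ) M (p, q) x))
        = ∑ a ∈ range C', d a (d m (lof R (ℤ × ℤ) M (p, q) x)) := by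
      intro m _
      by_cases hm : A ≤ m
      · rw [hvan _ m hm, map_zero]
        exact (Finset.sum_eq_zero fun a _ => by rw [map_zero]).symm
      · have hle : N (p - (m : ℤ) + 1, q + (m : ℤ)) ≤ B :=
          Finset.le_sup (f := fun m : ℕ => N (p - (m : ℤ) + 1, q + (m : ℤ)))
            (mem_range.mpr (by omega))
        obtain ⟨z, hz⟩ := hgr m p q x
        rw [← hz]
        exact htot _ z C' (by omega)
    rw [htot _ x C' (by omega), map_sum, Finset.sum_congr rfl hstep]
    have hv' : ∀ m a : ℕ, C' ≤ m + a → d a (d m (lof R (ℤ × ℤ) M (p, q) x)) = 0 := by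
      intro m a hma
      by_cases hm : A ≤ m
      · rw [hvan _ m hm, map_zero]
      · have hle : N (p - (m : ℤ) + 1, q + (m : ℤ)) ≤ B :=
          Finset.le_sup (f := fun m : ℕ => N (p - (m : ℤ) + 1, q + (m : ℤ)))
            (mem_range.mpr (by omega))
        obtain ⟨z, hz⟩ := hgr m p q x
        rw [← hz]
        exact hvan _ a (by omega) z
    rw [triangle C' _ hv']
    refine Finset.sum_congr rfl fun k _ => ?_
    rw [sqSum]
    simp only [LinearMap.sum_apply, LinearMap.comp_apply]
    rw [← Finset.sum_range_reflect
      (fun i => d i (d (k - i) (lof R (ℤ × ℤ) M (p, q) x))) (k + 1)]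
    refine Finset.sum_congr rfl fun a ha => ?_
    rw [mem_range, Nat.lt_succ_iff] at ha
    simp only [Nat.add_sub_cancel, Nat.sub_sub_self ha]

include hvan hgr htot in
lemma Dt_sq_zero (hcomp : ∀ k : ℕ, sqSum d k = 0) : Dt ∘ₗ Dt = 0 := by
  apply DirectSum.linearMap_ext
  rintro ⟨p, q⟩
  apply LinearMap.ext; intro x
  obtain ⟨C, _, he⟩ := core hvan hgr htot p q x
  simp only [LinearMap.comp_apply, LinearMap.zero_apply]
  rw [he C le_rfl]
  exact Finset.sum_eq_zero fun k _ => by rw [hcomp k, LinearMap.zero_apply]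

include hvan hgr htot in
lemma sq_of_Dt (hsq : Dt ∘ₗ Dt = 0) : ∀ k : ℕ, sqSum d k = 0 := by
  intro k
  apply DirectSum.linearMap_ext
  rintro ⟨p, q⟩
  apply LinearMap.ext; intro x
  obtain ⟨C, hv, he⟩ := core hvan hgr htot p q x
  simp only [LinearMap.comp_apply, LinearMap.zero_apply]
  have hmem : ∀ k' : ℕ, sqSum d k' (lof R (ℤ × ℤ) M (p, q) x) ∈
      LinearMap.range (lof R (ℤ × ℤ) M (p - (k' : ℤ) + 2, q + (k' : ℤ))) := by
    intro k'
    simp only [sqSum, LinearMap.sum_apply]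
    refine Submodule.sum_mem _ fun i hi => ?_
    rw [mem_range] at hi
    obtain ⟨z, hz⟩ := hgr (k' - i) p q x
    rw [LinearMap.comp_apply, ← hz]
    have := hgr i (p - ((k' - i : ℕ) : ℤ) + 1) (q + ((k' - i : ℕ) : ℤ)) z
    have harith : ((p - ((k' - i : ℕ) : ℤ) + 1) - (i : ℤ) + 1,
        (q + ((k' - i : ℕ) : ℤ)) + (i : ℤ)) = ((p - (k' : ℤ) + 2, q + (k' : ℤ)) : ℤ × ℤ) := by
      have h1 : ((k' - i : ℕ) : ℤ) = (k' : ℤ) - (i : ℤ) := by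
        push_cast [Nat.cast_sub (by omega : i ≤ k')]; ring
      rw [Prod.mk.injEq]; constructor <;> (rw [h1]; ring)
    rwa [harith] at this
  by_cases hk : k < C
  · have hz : ∑ k' ∈ range C, sqSum d k' (lof R (ℤ × ℤ) M (p, q) x) = 0 := by
      rw [← he C le_rfl]
      have := congrArg (fun F : Module.End R (⨁ pq, M pq) =>
          F (lof R (ℤ × ℤ) M (p, q) x)) hsq
      simpa using this
    have hinj : Function.Injective (fun k' : ℕ => ((p - (k' : ℤ) + 2, q + (k' : ℤ)) : ℤ × ℤ)) := by
      intro a b h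
      rw [Prod.mk.injEq] at h
      omega
    exact slot_separation hinj (fun k' => hmem k') hz k hk
  · simp only [sqSum, LinearMap.sum_apply]
    refine Finset.sum_eq_zero fun i hi => ?_
    rw [mem_range] at hi
    rw [LinearMap.comp_apply]
    exact hv (k - i) i (by omega)

end Generic


section Gauss

variable {R : Type} [CommRing R] {M M' : ℤ × ℤ → Type}
  [∀ pq, AddCommGroup (M pq)] [∀ pq, Module R (M pq)]
  [∀ pq, AddCommGroup (M' pq)] [∀ pq, Module R (M' pq)]
  {p₀ q₀ : ℤ} {b₁ D₀ b₂ E₀ : Type}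
  [AddCommGroup b₁] [Module R b₁] [AddCommGroup D₀] [Module R D₀]
  [AddCommGroup b₂] [Module R b₂] [AddCommGroup E₀] [Module R E₀]
  (e₁ : M (p₀, q₀) ≃ₗ[R] b₁ × D₀) (e₂ : M (p₀ + 1, q₀) ≃ₗ[R] b₂ × E₀)
  (n₁ : M' (p₀, q₀) ≃ₗ[R] D₀) (n₂ : M' (p₀ + 1, q₀) ≃ₗ[R] E₀)
  (nel : ∀ pq : ℤ × ℤ, pq ≠ (p₀, q₀) → pq ≠ (p₀ + 1, q₀) → (M' pq ≃ₗ[R] M pq))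

lemma ne_node : ((p₀ + 1, q₀) : ℤ × ℤ) ≠ (p₀, q₀) := by
  simp only [ne_eq, Prod.mk.injEq, not_and]; omega

/-- per-slot inclusion `M' pq → M pq` -/
def iotaSlot (pq : ℤ × ℤ) : M' pq →ₗ[R] M pq :=
  if h1 : pq = (p₀, q₀) then
    h1.symm ▸ (e₁.symm.toLinearMap ∘ₗ LinearMap.inr R b₁ D₀ ∘ₗ n₁.toLinearMap)
  else if h2 : pq = (p₀ + 1, q₀) then
    h2.symm ▸ (e₂.symm.toLinearMap ∘ₗ LinearMap.inr R b₂ E₀ ∘ₗ n₂.toLinearMap)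
  else (nel pq h1 h2).toLinearMap

/-- per-slot projection `M pq → M' pq` -/
def piSlot (pq : ℤ × ℤ) : M pq →ₗ[R] M' pq :=
  if h1 : pq = (p₀, q₀) then
    h1.symm ▸ (n₁.symm.toLinearMap ∘ₗ LinearMap.snd R b₁ D₀ ∘ₗ e₁.toLinearMap)
  else if h2 : pq = (p₀ + 1, q₀) then
    h2.symm ▸ (n₂.symm.toLinearMap ∘ₗ LinearMap.snd R b₂ E₀ ∘ₗ e₂.toLinearMap)
  else (nel pq h1 h2).symm.toLinearMap

lemma iotaSlot_node1 : iotaSlot e₁ e₂ n₁ n₂ nel (p₀, q₀)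
    = e₁.symm.toLinearMap ∘ₗ LinearMap.inr R b₁ D₀ ∘ₗ n₁.toLinearMap := by
  simp [iotaSlot]

lemma iotaSlot_node2 : iotaSlot e₁ e₂ n₁ n₂ nel (p₀ + 1, q₀)
    = e₂.symm.toLinearMap ∘ₗ LinearMap.inr R b₂ E₀ ∘ₗ n₂.toLinearMap := by
  simp [iotaSlot, ne_node]

lemma iotaSlot_nel (pq : ℤ × ℤ) (h1 : pq ≠ (p₀, q₀)) (h2 : pq ≠ (p₀ + 1, q₀)) :
    iotaSlot e₁ e₂ n₁ n₂ nel pq = (nel pq h1 h2).toLinearMap := by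
  simp [iotaSlot, h1, h2]

lemma piSlot_node1 : piSlot e₁ e₂ n₁ n₂ nel (p₀, q₀)
    = n₁.symm.toLinearMap ∘ₗ LinearMap.snd R b₁ D₀ ∘ₗ e₁.toLinearMap := by
  simp [piSlot]

lemma piSlot_node2 : piSlot e₁ e₂ n₁ n₂ nel (p₀ + 1, q₀)
    = n₂.symm.toLinearMap ∘ₗ LinearMap.snd R b₂ E₀ ∘ₗ e₂.toLinearMap := by
  simp [piSlot, ne_node]

lemma piSlot_nel (pq : ℤ × ℤ) (h1 : pq ≠ (p₀, q₀)) (h2 : pq ≠ (p₀ + 1, q₀)) :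
    piSlot e₁ e₂ n₁ n₂ nel pq = (nel pq h1 h2).symm.toLinearMap := by
  simp [piSlot, h1, h2]

/-- total inclusion -/
def Imap : (⨁ pq, M' pq) →ₗ[R] ⨁ pq, M pq :=
  DirectSum.toModule R (ℤ × ℤ) _ fun pq =>
    lof R (ℤ × ℤ) M pq ∘ₗ iotaSlot e₁ e₂ n₁ n₂ nel pq

/-- total projection -/
def Pmap : (⨁ pq, M pq) →ₗ[R] ⨁ pq, M' pq :=
  DirectSum.toModule R (ℤ × ℤ) _ fun pq =>
    lof R (ℤ × ℤ) M' pq ∘ₗ piSlot e₁ e₂ n₁ n₂ nel pq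

def i1 : b₁ →ₗ[R] ⨁ pq, M pq :=
  lof R (ℤ × ℤ) M (p₀, q₀) ∘ₗ e₁.symm.toLinearMap ∘ₗ LinearMap.inl R b₁ D₀

def p1 : (⨁ pq, M pq) →ₗ[R] b₁ :=
  LinearMap.fst R b₁ D₀ ∘ₗ e₁.toLinearMap ∘ₗ component R (ℤ × ℤ) M (p₀, q₀)

def i2 : b₂ →ₗ[R] ⨁ pq, M pq :=
  lof R (ℤ × ℤ) M (p₀ + 1, q₀) ∘ₗ e₂.symm.toLinearMap ∘ₗ LinearMap.inl R b₂ E₀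

def p2 : (⨁ pq, M pq) →ₗ[R] b₂ :=
  LinearMap.fst R b₂ E₀ ∘ₗ e₂.toLinearMap ∘ₗ component R (ℤ × ℤ) M (p₀ + 1, q₀)

lemma Imap_lof (pq : ℤ × ℤ) (x : M' pq) :
    Imap e₁ e₂ n₁ n₂ nel (lof R (ℤ × ℤ) M' pq x)
      = lof R (ℤ × ℤ) M pq (iotaSlot e₁ e₂ n₁ n₂ nel pq x) :=
  DirectSum.toModule_lof R pq x

lemma Pmap_lof (pq : ℤ × ℤ) (x : M pq) :
    Pmap e₁ e₂ n₁ n₂ nel (lof R (ℤ × ℤ) M pq x)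
      = lof R (ℤ × ℤ) M' pq (piSlot e₁ e₂ n₁ n₂ nel pq x) :=
  DirectSum.toModule_lof R pq x

lemma component_Pmap (pq' : ℤ × ℤ) (y : ⨁ pq, M pq) :
    component R (ℤ × ℤ) M' pq' (Pmap e₁ e₂ n₁ n₂ nel y)
      = piSlot e₁ e₂ n₁ n₂ nel pq' (component R (ℤ × ℤ) M pq' y) := by
  have : (component R (ℤ × ℤ) M' pq' ∘ₗ Pmap e₁ e₂ n₁ n₂ nel)
      = piSlot e₁ e₂ n₁ n₂ nel pq' ∘ₗ component R (ℤ × ℤ) M pq' := by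
    apply DirectSum.linearMap_ext
    intro s
    apply LinearMap.ext; intro x
    simp only [LinearMap.comp_apply, Pmap_lof]
    by_cases h : s = pq'
    · subst h; rw [component.lof_self, component.lof_self]
    · rw [component.of, component.of, dif_neg h, dif_neg h, map_zero]
  exact LinearMap.congr_fun this y

lemma piSlot_iotaSlot (pq : ℤ × ℤ) :
    piSlot e₁ e₂ n₁ n₂ nel pq ∘ₗ iotaSlot e₁ e₂ n₁ n₂ nel pq = LinearMap.id := by
  by_cases h1 : pq = (p₀, q₀)
  · subst h1
    rw [piSlot_node1, iotaSlot_node1]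
    apply LinearMap.ext; intro x; simp
  by_cases h2 : pq = (p₀ + 1, q₀)
  · subst h2
    rw [piSlot_node2, iotaSlot_node2]
    apply LinearMap.ext; intro x; simp
  · rw [piSlot_nel e₁ e₂ n₁ n₂ nel pq h1 h2, iotaSlot_nel e₁ e₂ n₁ n₂ nel pq h1 h2]
    apply LinearMap.ext; intro x; simp

lemma Pmap_Imap : Pmap e₁ e₂ n₁ n₂ nel ∘ₗ Imap e₁ e₂ n₁ n₂ nel = LinearMap.id := by
  apply DirectSum.linearMap_ext
  intro s
  apply LinearMap.ext; intro x
  simp only [LinearMap.comp_apply, LinearMap.id_apply]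
  rw [Imap_lof, Pmap_lof,
    ← LinearMap.comp_apply (piSlot e₁ e₂ n₁ n₂ nel s) (iotaSlot e₁ e₂ n₁ n₂ nel s),
    piSlot_iotaSlot, LinearMap.id_apply]

lemma decomp_id :
    Imap e₁ e₂ n₁ n₂ nel ∘ₗ Pmap e₁ e₂ n₁ n₂ nel
      + i1 e₁ ∘ₗ p1 e₁ + i2 e₂ ∘ₗ p2 e₂ = LinearMap.id := by
  apply DirectSum.linearMap_ext
  intro s
  apply LinearMap.ext; intro x
  simp only [LinearMap.add_apply, LinearMap.comp_apply, Pmap_lof, Imap_lof,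
    LinearMap.id_apply, i1, p1, i2, p2]
  by_cases h1 : s = (p₀, q₀)
  · subst h1
    rw [component.lof_self, lof_range_component (Ne.symm (ne_node)) ⟨x, rfl⟩]
    rw [piSlot_node1, iotaSlot_node1]
    simp only [LinearMap.comp_apply, LinearMap.fst_apply, LinearMap.snd_apply,
      LinearMap.inl_apply, LinearMap.inr_apply, LinearEquiv.coe_coe, map_zero,
      LinearEquiv.apply_symm_apply, LinearEquiv.symm_apply_apply, add_zero]
    rw [← map_add, ← map_add]
    rw [show ((0 : b₁), (e₁ x).2) + ((e₁ x).1, (0 : D₀)) = e₁ x from by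
      rw [Prod.mk_add_mk, zero_add, add_zero]]
    simp
  by_cases h2 : s = (p₀ + 1, q₀)
  · subst h2
    rw [component.lof_self, lof_range_component ne_node ⟨x, rfl⟩]
    rw [piSlot_node2, iotaSlot_node2]
    simp only [LinearMap.comp_apply, LinearMap.fst_apply, LinearMap.snd_apply,
      LinearMap.inl_apply, LinearMap.inr_apply, LinearEquiv.coe_coe, map_zero,
      LinearEquiv.apply_symm_apply, LinearEquiv.symm_apply_apply, zero_add]
    rw [add_zero, ← map_add, ← map_add]
    rw [show ((0 : b₂), (e₂ x).2) + ((e₂ x).1, (0 : E₀)) = e₂ x from by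
      rw [Prod.mk_add_mk, zero_add, add_zero]]
    simp
  · rw [lof_range_component h1 ⟨x, rfl⟩, lof_range_component h2 ⟨x, rfl⟩]
    rw [piSlot_nel e₁ e₂ n₁ n₂ nel s h1 h2, iotaSlot_nel e₁ e₂ n₁ n₂ nel s h1 h2]
    simp
    simp only [Prod.mk_zero_zero, map_zero, add_zero]

lemma p2_i1 : p2 e₂ ∘ₗ i1 e₁ = 0 := by
  apply LinearMap.ext; intro x
  simp only [LinearMap.comp_apply, p2, i1, LinearMap.zero_apply]
  rw [lof_range_component (Ne.symm ne_node) ⟨_, rfl⟩]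
  simp

lemma Pmap_i1 : Pmap e₁ e₂ n₁ n₂ nel ∘ₗ i1 e₁ = 0 := by
  apply LinearMap.ext; intro x
  simp only [LinearMap.comp_apply, i1, Pmap_lof, LinearMap.zero_apply, piSlot_node1]
  simp

lemma p2_Imap : p2 e₂ ∘ₗ Imap e₁ e₂ n₁ n₂ nel = 0 := by
  apply DirectSum.linearMap_ext
  intro s
  apply LinearMap.ext; intro x
  simp only [LinearMap.comp_apply, Imap_lof, p2, LinearMap.zero_apply]
  by_cases h2 : s = (p₀ + 1, q₀)
  · subst h2
    rw [component.lof_self, iotaSlot_node2]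
    simp
  · rw [lof_range_component h2 ⟨_, rfl⟩]
    simp

variable (φe : b₁ ≃ₗ[R] b₂)

/-- the contraction homotopy -/
def hmap : Module.End R (⨁ pq, M pq) := i1 e₁ ∘ₗ φe.symm.toLinearMap ∘ₗ p2 e₂

/-- the projection `1 - Dh - hD` -/
def piT (D : Module.End R (⨁ pq, M pq)) : Module.End R (⨁ pq, M pq) :=
  LinearMap.id - D ∘ₗ hmap e₁ e₂ φe - hmap e₁ e₂ φe ∘ₗ D

section Algebra

variable {D : Module.End R (⨁ pq, M pq)}

lemma hφD' (hφD : p2 e₂ ∘ₗ D ∘ₗ i1 e₁ = φe.toLinearMap) (y : b₁) : p2 e₂ (D (i1 e₁ y)) = φe y := by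
  have := LinearMap.congr_fun hφD y
  simpa using this

lemma hD2' (hD2 : D ∘ₗ D = 0) (y : ⨁ pq, M pq) : D (D y) = 0 := by
  have := LinearMap.congr_fun hD2 y
  simpa using this

lemma hmap_D_hmap (hφD : p2 e₂ ∘ₗ D ∘ₗ i1 e₁ = φe.toLinearMap) (y : ⨁ pq, M pq) :
    hmap e₁ e₂ φe (D (hmap e₁ e₂ φe y)) = hmap e₁ e₂ φe y := by
  simp only [hmap, LinearMap.comp_apply, LinearEquiv.coe_coe]
  rw [hφD' e₁ e₂ φe hφD, LinearEquiv.symm_apply_apply]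

lemma piT_D (hD2 : D ∘ₗ D = 0) (y : ⨁ pq, M pq) : piT e₁ e₂ φe D (D y) = D (piT e₁ e₂ φe D y) := by
  simp only [piT, LinearMap.sub_apply, LinearMap.comp_apply, LinearMap.id_apply,
    map_sub, hD2' hD2, map_zero]
  abel

lemma piT_piT (hφD : p2 e₂ ∘ₗ D ∘ₗ i1 e₁ = φe.toLinearMap) (hD2 : D ∘ₗ D = 0) (y : ⨁ pq, M pq) :
    piT e₁ e₂ φe D (piT e₁ e₂ φe D y) = piT e₁ e₂ φe D y := by
  have hp2i1 : ∀ z : b₁, p2 e₂ (i1 e₁ z) = 0 := fun z => by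
    have := LinearMap.congr_fun (p2_i1 e₁ e₂) z; simpa using this
  simp only [piT, hmap, LinearMap.sub_apply, LinearMap.comp_apply, LinearMap.id_apply,
    map_sub, hD2' hD2, map_zero, LinearEquiv.coe_coe, hp2i1, LinearEquiv.symm_apply_apply,
    hφD' e₁ e₂ φe hφD, sub_zero]
  abel

lemma piT_i1 (hφD : p2 e₂ ∘ₗ D ∘ₗ i1 e₁ = φe.toLinearMap) (y : b₁) : piT e₁ e₂ φe D (i1 e₁ y) = 0 := by
  simp only [piT, LinearMap.sub_apply, LinearMap.comp_apply, LinearMap.id_apply]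
  rw [show hmap e₁ e₂ φe (i1 e₁ y) = 0 from by
    simp only [hmap, LinearMap.comp_apply]
    have := LinearMap.congr_fun (p2_i1 e₁ e₂) y
    simp only [LinearMap.comp_apply, LinearMap.zero_apply] at this
    rw [this]; simp]
  rw [show hmap e₁ e₂ φe (D (i1 e₁ y)) = i1 e₁ y from by
    simp only [hmap, LinearMap.comp_apply, LinearEquiv.coe_coe]
    rw [hφD' e₁ e₂ φe hφD, LinearEquiv.symm_apply_apply]]
  simp

lemma p2_piT (hφD : p2 e₂ ∘ₗ D ∘ₗ i1 e₁ = φe.toLinearMap) (y : ⨁ pq, M pq) : p2 e₂ (piT e₁ e₂ φe D y) = 0 := by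
  simp only [piT, LinearMap.sub_apply, LinearMap.comp_apply, LinearMap.id_apply, map_sub]
  rw [show p2 e₂ (D (hmap e₁ e₂ φe y)) = p2 e₂ y from by
    simp only [hmap, LinearMap.comp_apply, LinearEquiv.coe_coe]
    rw [hφD' e₁ e₂ φe hφD, LinearEquiv.apply_symm_apply]]
  rw [show p2 e₂ (hmap e₁ e₂ φe (D y)) = 0 from by
    simp only [hmap, LinearMap.comp_apply, LinearEquiv.coe_coe]
    have := LinearMap.congr_fun (p2_i1 e₁ e₂) (φe.symm (p2 e₂ (D y)))
    simpa using this]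
  simp

lemma hmap_Imap (y : ⨁ pq, M' pq) :
    hmap e₁ e₂ φe (Imap e₁ e₂ n₁ n₂ nel y) = 0 := by
  simp only [hmap, LinearMap.comp_apply]
  have := LinearMap.congr_fun (p2_Imap e₁ e₂ n₁ n₂ nel) y
  simp only [LinearMap.comp_apply, LinearMap.zero_apply] at this
  rw [this]; simp

lemma Pmap_hmap (y : ⨁ pq, M pq) :
    Pmap e₁ e₂ n₁ n₂ nel (hmap e₁ e₂ φe y) = 0 := by
  simp only [hmap, LinearMap.comp_apply]
  have := LinearMap.congr_fun (Pmap_i1 e₁ e₂ n₁ n₂ nel) (φe.symm (p2 e₂ y))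
  simpa using this

/-- the homotopy equivalence maps -/
def fmap (D : Module.End R (⨁ pq, M pq)) : (⨁ pq, M pq) →ₗ[R] ⨁ pq, M' pq :=
  Pmap e₁ e₂ n₁ n₂ nel ∘ₗ piT e₁ e₂ φe D

def gmap (D : Module.End R (⨁ pq, M pq)) : (⨁ pq, M' pq) →ₗ[R] ⨁ pq, M pq :=
  piT e₁ e₂ φe D ∘ₗ Imap e₁ e₂ n₁ n₂ nel

lemma fg_eq (hφD : p2 e₂ ∘ₗ D ∘ₗ i1 e₁ = φe.toLinearMap) (hD2 : D ∘ₗ D = 0) (y : ⨁ pq, M' pq) :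
    fmap e₁ e₂ n₁ n₂ nel φe D (gmap e₁ e₂ n₁ n₂ nel φe D y) = y := by
  simp only [fmap, gmap, LinearMap.comp_apply]
  rw [piT_piT e₁ e₂ φe hφD hD2]
  simp only [piT, LinearMap.sub_apply, LinearMap.comp_apply, LinearMap.id_apply, map_sub]
  rw [hmap_Imap e₁ e₂ n₁ n₂ nel φe, map_zero, map_zero, sub_zero, Pmap_hmap e₁ e₂ n₁ n₂ nel φe,
    sub_zero]
  have := LinearMap.congr_fun (Pmap_Imap e₁ e₂ n₁ n₂ nel) y
  simpa using this

lemma gf_eq (hφD : p2 e₂ ∘ₗ D ∘ₗ i1 e₁ = φe.toLinearMap) (hD2 : D ∘ₗ D = 0) (y : ⨁ pq, M pq) :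
    gmap e₁ e₂ n₁ n₂ nel φe D (fmap e₁ e₂ n₁ n₂ nel φe D y) = piT e₁ e₂ φe D y := by
  have hd := LinearMap.congr_fun (decomp_id e₁ e₂ n₁ n₂ nel) (piT e₁ e₂ φe D y)
  simp only [LinearMap.add_apply, LinearMap.comp_apply, LinearMap.id_apply] at hd
  have h2 := eq_sub_of_add_eq (eq_sub_of_add_eq hd)
  simp only [fmap, gmap, LinearMap.comp_apply]
  rw [h2, p2_piT e₁ e₂ φe hφD, map_zero, sub_zero, map_sub,
    piT_i1 e₁ e₂ φe hφD, sub_zero, piT_piT e₁ e₂ φe hφD hD2]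

end Algebra

section WithD

variable (d : ℕ → Module.End R (⨁ pq, M pq))

/-- the correction term `γ_{i'} φ⁻¹ δ_j` as an endomorphism of the new total module -/
def corr (a b : ℕ) : Module.End R (⨁ pq, M' pq) :=
  (Pmap e₁ e₂ n₁ n₂ nel ∘ₗ d a ∘ₗ i1 e₁) ∘ₗ φe.symm.toLinearMap ∘ₗ
    (p2 e₂ ∘ₗ d b ∘ₗ Imap e₁ e₂ n₁ n₂ nel)

/-- the Gaussian-eliminated differentials -/
def dNew (k : ℕ) : Module.End R (⨁ pq, M' pq) :=
  Pmap e₁ e₂ n₁ n₂ nel ∘ₗ d k ∘ₗ Imap e₁ e₂ n₁ n₂ nel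
    - ∑ a ∈ range (k + 1), corr e₁ e₂ n₁ n₂ nel φe d a (k - a)

variable
  (hgr : ∀ (i : ℕ) (p q : ℤ) (x : M (p, q)),
      d i (DirectSum.lof R (ℤ × ℤ) M (p, q) x) ∈
        LinearMap.range (DirectSum.lof R (ℤ × ℤ) M (p - (i : ℤ) + 1, q + (i : ℤ))))

include hgr in
lemma src_zero (b : ℕ) (p q : ℤ) (h : (p, q) ≠ ((p₀ + (b : ℤ), q₀ - (b : ℤ)) : ℤ × ℤ))
    (y : M (p, q)) : p2 e₂ (d b (lof R (ℤ × ℤ) M (p, q) y)) = 0 := by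
  have hne : ((p - (b : ℤ) + 1, q + (b : ℤ)) : ℤ × ℤ) ≠ (p₀ + 1, q₀) := by
    simp only [ne_eq, Prod.mk.injEq, not_and] at h ⊢
    intro h1 h2
    exfalso
    rcases eq_or_ne p (p₀ + (b : ℤ)) with hp | hp
    · exact h hp (by omega)
    · omega
  rw [p2, LinearMap.comp_apply, LinearMap.comp_apply,
    lof_range_component hne (hgr b p q y), map_zero, map_zero]

include hgr in
lemma tgt_zero (a : ℕ) (pq' : ℤ × ℤ) (h : pq' ≠ ((p₀ - (a : ℤ) + 1, q₀ + (a : ℤ)) : ℤ × ℤ))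
    (z : b₁) :
    component R (ℤ × ℤ) M' pq' (Pmap e₁ e₂ n₁ n₂ nel (d a (i1 e₁ z))) = 0 := by
  have h2 : ((p₀ - (a : ℤ) + 1, q₀ + (a : ℤ)) : ℤ × ℤ) ≠ pq' := fun hh => h hh.symm
  rw [component_Pmap]
  simp only [i1, LinearMap.comp_apply, LinearEquiv.coe_coe, LinearMap.inl_apply]
  rw [lof_range_component h2 (hgr a p₀ q₀ (e₁.symm (z, 0))), map_zero]

/-- entry of the main (conjugated) part -/
lemma entry_main (i : ℕ) (s t : ℤ × ℤ) :
    entryMap R M' (Pmap e₁ e₂ n₁ n₂ nel ∘ₗ d i ∘ₗ Imap e₁ e₂ n₁ n₂ nel) s t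
      = piSlot e₁ e₂ n₁ n₂ nel t ∘ₗ entryMap R M (d i) s t ∘ₗ iotaSlot e₁ e₂ n₁ n₂ nel s := by
  apply LinearMap.ext; intro x
  simp only [entryMap, LinearMap.comp_apply, Imap_lof, component_Pmap]

/-- entry of a correction term -/
lemma entry_corr (a b : ℕ) (s t : ℤ × ℤ) :
    entryMap R M' (corr e₁ e₂ n₁ n₂ nel φe d a b) s t
      = (piSlot e₁ e₂ n₁ n₂ nel t ∘ₗ
          entryMap R M (d a) (p₀, q₀) t ∘ₗ
          e₁.symm.toLinearMap ∘ₗ LinearMap.inl R b₁ D₀) ∘ₗ φe.symm.toLinearMap ∘ₗ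
        (LinearMap.fst R b₂ E₀ ∘ₗ e₂.toLinearMap ∘ₗ
          entryMap R M (d b) s (p₀ + 1, q₀)) ∘ₗ
        iotaSlot e₁ e₂ n₁ n₂ nel s := by
  apply LinearMap.ext; intro x
  simp only [entryMap, corr, i1, p2, LinearMap.comp_apply, Imap_lof, component_Pmap,
    LinearEquiv.coe_coe]

include hgr in
lemma entry_corr_src_zero (a b : ℕ) (p q : ℤ)
    (h : (p, q) ≠ ((p₀ + (b : ℤ), q₀ - (b : ℤ)) : ℤ × ℤ)) (t : ℤ × ℤ) :
    entryMap R M' (corr e₁ e₂ n₁ n₂ nel φe d a b) (p, q) t = 0 := by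
  apply LinearMap.ext; intro x
  simp only [entryMap, corr, LinearMap.comp_apply, Imap_lof, LinearMap.zero_apply]
  rw [src_zero e₂ d hgr b p q h]
  simp

include hgr in
lemma entry_corr_tgt_zero (a b : ℕ) (s : ℤ × ℤ) (t : ℤ × ℤ)
    (h : t ≠ ((p₀ - (a : ℤ) + 1, q₀ + (a : ℤ)) : ℤ × ℤ)) :
    entryMap R M' (corr e₁ e₂ n₁ n₂ nel φe d a b) s t = 0 := by
  apply LinearMap.ext; intro x
  simp only [entryMap, corr, i1, LinearMap.comp_apply, LinearMap.zero_apply,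
    LinearEquiv.coe_coe]
  have := tgt_zero e₁ e₂ n₁ n₂ nel d hgr a t h
    (φe.symm (p2 e₂ (d b (Imap e₁ e₂ n₁ n₂ nel (lof R (ℤ × ℤ) M' s x)))))
  simpa [i1] using this

include hgr in
lemma dNew_grade (i : ℕ) (p q : ℤ) (x : M' (p, q)) :
    dNew e₁ e₂ n₁ n₂ nel φe d i (lof R (ℤ × ℤ) M' (p, q) x) ∈
      LinearMap.range (lof R (ℤ × ℤ) M' (p - (i : ℤ) + 1, q + (i : ℤ))) := by
  rw [dNew]
  simp only [LinearMap.sub_apply, LinearMap.sum_apply, LinearMap.comp_apply]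
  apply Submodule.sub_mem
  · rw [Imap_lof]
    obtain ⟨z, hz⟩ := hgr i p q (iotaSlot e₁ e₂ n₁ n₂ nel (p, q) x)
    rw [← hz, Pmap_lof]
    exact ⟨_, rfl⟩
  · apply Submodule.sum_mem
    intro a ha
    rw [Finset.mem_range] at ha
    by_cases hs : ((p, q) : ℤ × ℤ) = (p₀ + ((i - a : ℕ) : ℤ), q₀ - ((i - a : ℕ) : ℤ))
    · rw [corr]
      simp only [LinearMap.comp_apply, LinearEquiv.coe_coe, i1, LinearMap.inl_apply]
      obtain ⟨z, hz⟩ := hgr a p₀ q₀ (e₁.symm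
        ((φe.symm (p2 e₂ (d (i - a) (Imap e₁ e₂ n₁ n₂ nel (lof R (ℤ × ℤ) M' (p, q) x))))), 0))
      rw [← hz, Pmap_lof]
      have hslot : ((p₀ - (a : ℤ) + 1, q₀ + (a : ℤ)) : ℤ × ℤ)
          = (p - (i : ℤ) + 1, q + (i : ℤ)) := by
        rw [Prod.mk.injEq] at hs ⊢
        omega
      rw [← hslot]
      exact ⟨_, rfl⟩
    · rw [corr]
      simp only [LinearMap.comp_apply, Imap_lof]
      rw [src_zero e₂ d hgr (i - a) p q hs]
      simp only [map_zero]
      exact Submodule.zero_mem _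

lemma entry_dNew (k : ℕ) (s t : ℤ × ℤ) :
    entryMap R M' (dNew e₁ e₂ n₁ n₂ nel φe d k) s t
      = entryMap R M' (Pmap e₁ e₂ n₁ n₂ nel ∘ₗ d k ∘ₗ Imap e₁ e₂ n₁ n₂ nel) s t
        - ∑ a ∈ range (k + 1),
            entryMap R M' (corr e₁ e₂ n₁ n₂ nel φe d a (k - a)) s t := by
  apply LinearMap.ext; intro x
  simp only [entryMap, dNew, LinearMap.sub_apply, LinearMap.sum_apply, LinearMap.comp_apply,
    map_sub, map_sum]

variable {N : ℤ × ℤ → ℕ}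
  (hvan : ∀ pq : ℤ × ℤ, ∀ i : ℕ, N pq ≤ i → ∀ x : M pq, d i (lof R (ℤ × ℤ) M pq x) = 0)

include hvan in
lemma dNew_van (pq : ℤ × ℤ) (i : ℕ) (h : N pq + N (p₀, q₀) ≤ i) (x : M' pq) :
    dNew e₁ e₂ n₁ n₂ nel φe d i (lof R (ℤ × ℤ) M' pq x) = 0 := by
  rw [dNew]
  simp only [LinearMap.sub_apply, LinearMap.sum_apply, LinearMap.comp_apply, Imap_lof]
  rw [hvan pq i (by omega), map_zero]
  rw [Finset.sum_eq_zero, sub_zero]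
  intro a ha
  rw [Finset.mem_range] at ha
  rw [corr]
  simp only [LinearMap.comp_apply, Imap_lof, LinearEquiv.coe_coe, i1, LinearMap.inl_apply]
  by_cases hA : N (p₀, q₀) ≤ a
  · rw [hvan (p₀, q₀) a hA, map_zero]
  · rw [hvan pq (i - a) (by omega)]
    simp
    simp only [Prod.mk_zero_zero, map_zero]

include hvan hgr in
lemma p2_Dt_i1 (hφ : φe.toLinearMap =
      LinearMap.fst R b₂ E₀ ∘ₗ e₂.toLinearMap ∘ₗ
        entryMap R M (d 0) (p₀, q₀) (p₀ + 1, q₀) ∘ₗ e₁.symm.toLinearMap ∘ₗ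
        LinearMap.inl R b₁ D₀) :
    p2 e₂ ∘ₗ DtotOf d N ∘ₗ i1 e₁ = φe.toLinearMap := by
  apply LinearMap.ext; intro z
  simp only [LinearMap.comp_apply, i1, LinearEquiv.coe_coe, LinearMap.inl_apply]
  rw [DtotOf_lof hvan (p₀, q₀) (e₁.symm (z, 0))
    (le_max_left (N (p₀, q₀)) 1), map_sum]
  rw [Finset.sum_eq_single 0]
  · have hz := LinearMap.congr_fun hφ z
    simp only [entryMap, LinearMap.comp_apply, LinearEquiv.coe_coe, LinearMap.inl_apply,
      LinearMap.fst_apply] at hz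
    simp only [p2, LinearMap.comp_apply, LinearEquiv.coe_coe, LinearMap.fst_apply]
    exact hz.symm
  · intro i _ hi
    exact src_zero e₂ d hgr i p₀ q₀
      (by simp only [ne_eq, Prod.mk.injEq, not_and]; intro _; omega) _
  · intro h0
    exact absurd (Finset.mem_range.mpr (by omega : 0 < max (N (p₀, q₀)) 1)) h0

lemma fDg_apply {D : Module.End R (⨁ pq, M pq)}
    (hφD : p2 e₂ ∘ₗ D ∘ₗ i1 e₁ = φe.toLinearMap) (y : ⨁ pq, M' pq) :
    fmap e₁ e₂ n₁ n₂ nel φe D (D (gmap e₁ e₂ n₁ n₂ nel φe D y))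
      = Pmap e₁ e₂ n₁ n₂ nel (D (Imap e₁ e₂ n₁ n₂ nel y))
        - Pmap e₁ e₂ n₁ n₂ nel (D (i1 e₁ (φe.symm
            (p2 e₂ (D (Imap e₁ e₂ n₁ n₂ nel y)))))) := by
  have hg : gmap e₁ e₂ n₁ n₂ nel φe D y
      = Imap e₁ e₂ n₁ n₂ nel y - hmap e₁ e₂ φe (D (Imap e₁ e₂ n₁ n₂ nel y)) := by
    simp only [gmap, piT, LinearMap.sub_apply, LinearMap.comp_apply, LinearMap.id_apply]
    rw [hmap_Imap e₁ e₂ n₁ n₂ nel φe, map_zero, sub_zero]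
  have hf : ∀ z, fmap e₁ e₂ n₁ n₂ nel φe D z
      = Pmap e₁ e₂ n₁ n₂ nel z - Pmap e₁ e₂ n₁ n₂ nel (D (hmap e₁ e₂ φe z)) := by
    intro z
    simp only [fmap, piT, LinearMap.sub_apply, LinearMap.comp_apply, LinearMap.id_apply,
      map_sub]
    rw [Pmap_hmap e₁ e₂ n₁ n₂ nel φe, sub_zero]
  rw [hg, map_sub, hf]
  have hzero : hmap e₁ e₂ φe (D (Imap e₁ e₂ n₁ n₂ nel y)
      - D (hmap e₁ e₂ φe (D (Imap e₁ e₂ n₁ n₂ nel y)))) = 0 := by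
    rw [map_sub, hmap_D_hmap e₁ e₂ φe hφD, sub_self]
  rw [hzero, map_zero, map_zero, sub_zero, map_sub]
  simp only [hmap, LinearMap.comp_apply, LinearEquiv.coe_coe]

include hvan hgr in
lemma DtNew_lof (hφ : φe.toLinearMap =
      LinearMap.fst R b₂ E₀ ∘ₗ e₂.toLinearMap ∘ₗ
        entryMap R M (d 0) (p₀, q₀) (p₀ + 1, q₀) ∘ₗ e₁.symm.toLinearMap ∘ₗ
        LinearMap.inl R b₁ D₀)
    (pq : ℤ × ℤ) (x : M' pq) {N' : ℕ} (hN' : N pq + N (p₀, q₀) ≤ N') :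
    fmap e₁ e₂ n₁ n₂ nel φe (DtotOf d N) (DtotOf d N
        (gmap e₁ e₂ n₁ n₂ nel φe (DtotOf d N) (lof R (ℤ × ℤ) M' pq x)))
      = ∑ k ∈ range N', dNew e₁ e₂ n₁ n₂ nel φe d k (lof R (ℤ × ℤ) M' pq x) := by
  have hφD := p2_Dt_i1 e₁ e₂ φe d hgr hvan hφ
  rw [fDg_apply e₁ e₂ n₁ n₂ nel φe hφD]
  have hu : Imap e₁ e₂ n₁ n₂ nel (lof R (ℤ × ℤ) M' pq x)
      = lof R (ℤ × ℤ) M pq (iotaSlot e₁ e₂ n₁ n₂ nel pq x) := Imap_lof e₁ e₂ n₁ n₂ nel pq x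
  have h1 : DtotOf d N (Imap e₁ e₂ n₁ n₂ nel (lof R (ℤ × ℤ) M' pq x))
      = ∑ i ∈ range N', d i (Imap e₁ e₂ n₁ n₂ nel (lof R (ℤ × ℤ) M' pq x)) := by
    rw [hu]
    exact DtotOf_lof hvan pq _ (by omega)
  rw [h1, map_sum]
  -- second term
  have h2 : i1 e₁ (φe.symm (p2 e₂ (∑ i ∈ range N',
        d i (Imap e₁ e₂ n₁ n₂ nel (lof R (ℤ × ℤ) M' pq x)))))
      = ∑ j ∈ range N', i1 e₁ (φe.symm (p2 e₂
          (d j (Imap e₁ e₂ n₁ n₂ nel (lof R (ℤ × ℤ) M' pq x))))) := by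
    rw [map_sum, map_sum, map_sum]
  rw [h2]
  have h3 : DtotOf d N (∑ j ∈ range N', i1 e₁ (φe.symm (p2 e₂
        (d j (Imap e₁ e₂ n₁ n₂ nel (lof R (ℤ × ℤ) M' pq x))))))
      = ∑ j ∈ range N', ∑ a ∈ range N', d a (i1 e₁ (φe.symm (p2 e₂
          (d j (Imap e₁ e₂ n₁ n₂ nel (lof R (ℤ × ℤ) M' pq x)))))) := by
    rw [map_sum]
    refine Finset.sum_congr rfl fun j _ => ?_
    simp only [i1, LinearMap.comp_apply, LinearEquiv.coe_coe, LinearMap.inl_apply]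
    exact DtotOf_lof hvan (p₀, q₀) _ (by omega)
  rw [h3, map_sum]
  simp only [map_sum]
  -- now both terms are explicit double/single sums
  rw [Finset.sum_comm]
  have htri : ∑ a ∈ range N', ∑ j ∈ range N',
        Pmap e₁ e₂ n₁ n₂ nel (d a (i1 e₁ (φe.symm (p2 e₂
          (d j (Imap e₁ e₂ n₁ n₂ nel (lof R (ℤ × ℤ) M' pq x)))))))
      = ∑ k ∈ range N', ∑ a ∈ range (k + 1),
          Pmap e₁ e₂ n₁ n₂ nel (d a (i1 e₁ (φe.symm (p2 e₂
            (d (k - a) (Imap e₁ e₂ n₁ n₂ nel (lof R (ℤ × ℤ) M' pq x))))))) := by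
    apply triangle
    intro a j haj
    by_cases hA : N (p₀, q₀) ≤ a
    · rw [show i1 e₁ (φe.symm (p2 e₂ (d j (Imap e₁ e₂ n₁ n₂ nel
          (lof R (ℤ × ℤ) M' pq x))))) = lof R (ℤ × ℤ) M (p₀, q₀) (e₁.symm
            ((φe.symm (p2 e₂ (d j (Imap e₁ e₂ n₁ n₂ nel (lof R (ℤ × ℤ) M' pq x))))), 0))
          from rfl]
      rw [hvan (p₀, q₀) a hA, map_zero]
    · rw [hu, hvan pq j (by omega)]
      simp
  rw [htri, ← Finset.sum_sub_distrib]
  refine Finset.sum_congr rfl fun k _ => ?_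
  rw [dNew]
  simp only [LinearMap.sub_apply, LinearMap.sum_apply, LinearMap.comp_apply, corr,
    LinearEquiv.coe_coe]

end WithD


end Gauss

end GaussAux

/-- Gaussian elimination in a perturbed double complex.
Let `Ω = (M, d)` be a perturbed double complex with `Ω_{p₀,q₀} ≅ b₁ ⊕ D₀` and
`Ω_{p₀+1,q₀} ≅ b₂ ⊕ E₀` (via `e₁, e₂`), such that the `b₁`-to-`b₂` component `φ` of
`d⁰ : Ω_{p₀,q₀} → Ω_{p₀+1,q₀}` is an isomorphism.  Then on the family `M'` obtained by
replacing `Ω_{p₀,q₀}` by `D₀` and `Ω_{p₀+1,q₀}` by `E₀` (all other objects unchanged,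
via the identifications `n₁, n₂, nel`) there are differentials `d'` given by the
Gaussian-elimination formulas — each `d'^{i+j} : Ω_{p₀+j,q₀−j} → Ω_{p₀−i+1,q₀+i}`
between other nodes is corrected to `d^{i+j} − γᵢ φ⁻¹ δⱼ`, the maps out of `D₀` are
`ε_{i0} − γᵢ φ⁻¹ δ₀`, the maps into `E₀` are `ε_{0j} − γ₀ φ⁻¹ δⱼ`, the maps into `D₀`
and out of `E₀` are the truncations `βⱼ`, `νᵢ`, and all remaining components are
unchanged — such that `(M', d')` is again a perturbed double complex whose total complex
is homotopy equivalent to `Tot Ω`. -/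
theorem gaussian_elimination_perturbed {R : Type} [CommRing R]
    (M : ℤ × ℤ → Type) [∀ pq, AddCommGroup (M pq)] [∀ pq, Module R (M pq)]
    (M' : ℤ × ℤ → Type) [∀ pq, AddCommGroup (M' pq)] [∀ pq, Module R (M' pq)]
    (p₀ q₀ : ℤ)
    (b₁ D₀ b₂ E₀ : Type)
    [AddCommGroup b₁] [Module R b₁] [AddCommGroup D₀] [Module R D₀]
    [AddCommGroup b₂] [Module R b₂] [AddCommGroup E₀] [Module R E₀]
    (e₁ : M (p₀, q₀) ≃ₗ[R] b₁ × D₀) (e₂ : M (p₀ + 1, q₀) ≃ₗ[R] b₂ × E₀)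
    -- the new family: `D₀` at `(p₀,q₀)`, `E₀` at `(p₀+1,q₀)`, unchanged elsewhere
    (n₁ : M' (p₀, q₀) ≃ₗ[R] D₀) (n₂ : M' (p₀ + 1, q₀) ≃ₗ[R] E₀)
    (nel : ∀ pq : ℤ × ℤ, pq ≠ (p₀, q₀) → pq ≠ (p₀ + 1, q₀) → (M' pq ≃ₗ[R] M pq))
    (d : ℕ → Module.End R (⨁ pq, M pq))
    -- each `dⁱ` shifts the bidegree `(p, q)` to `(p − i + 1, q + i)`:
    (hgr : ∀ (i : ℕ) (p q : ℤ) (x : M (p, q)),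
      d i (DirectSum.lof R (ℤ × ℤ) M (p, q) x) ∈
        LinearMap.range (DirectSum.lof R (ℤ × ℤ) M (p - (i : ℤ) + 1, q + (i : ℤ))))
    -- only finitely many `dⁱ` are nonzero on each object:
    (hbd : ∀ pq : ℤ × ℤ, ∃ N : ℕ, ∀ i ≥ N, ∀ x : M pq,
      d i (DirectSum.lof R (ℤ × ℤ) M pq x) = 0)
    -- `Ω` is a perturbed double complex:
    (hcomp : ∀ k : ℕ, ∑ i ∈ Finset.range (k + 1), d i ∘ₗ d (k - i) = 0)
    -- the `b₁`-to-`b₂` component `φ` of `d⁰` is an isomorphism `φe`: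
    (φe : b₁ ≃ₗ[R] b₂)
    (hφ : φe.toLinearMap =
      LinearMap.fst R b₂ E₀ ∘ₗ e₂.toLinearMap ∘ₗ
        entryMap R M (d 0) (p₀, q₀) (p₀ + 1, q₀) ∘ₗ e₁.symm.toLinearMap ∘ₗ
        LinearMap.inl R b₁ D₀) :
    ∃ d' : ℕ → Module.End R (⨁ pq, M' pq),
      -- (A) corrected components between ordinary nodes: `d^{i'+j} − γ_{i'} φ⁻¹ δ_j`
      (∀ i' j : ℕ, 1 ≤ i' → 1 ≤ j →
        ∀ (h1 : ((p₀ + (j : ℤ), q₀ - (j : ℤ)) : ℤ × ℤ) ≠ (p₀, q₀))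
          (h2 : ((p₀ + (j : ℤ), q₀ - (j : ℤ)) : ℤ × ℤ) ≠ (p₀ + 1, q₀))
          (h3 : ((p₀ - (i' : ℤ) + 1, q₀ + (i' : ℤ)) : ℤ × ℤ) ≠ (p₀, q₀))
          (h4 : ((p₀ - (i' : ℤ) + 1, q₀ + (i' : ℤ)) : ℤ × ℤ) ≠ (p₀ + 1, q₀)),
        entryMap R M' (d' (i' + j)) (p₀ + (j : ℤ), q₀ - (j : ℤ))
            (p₀ - (i' : ℤ) + 1, q₀ + (i' : ℤ))
          = (nel _ h3 h4).symm.toLinearMap ∘ₗ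
              (entryMap R M (d (i' + j)) (p₀ + (j : ℤ), q₀ - (j : ℤ))
                  (p₀ - (i' : ℤ) + 1, q₀ + (i' : ℤ))
                - gam R M p₀ q₀ b₁ D₀ e₁ d i' ∘ₗ φe.symm.toLinearMap ∘ₗ
                    del R M p₀ q₀ b₂ E₀ e₂ d j) ∘ₗ
              (nel _ h1 h2).toLinearMap) ∧
      -- (B) all components between ordinary nodes not of the above corrected shape
      --     are unchanged
      (∀ (i : ℕ) (pq pq' : ℤ × ℤ)
        (h1 : pq ≠ (p₀, q₀)) (h2 : pq ≠ (p₀ + 1, q₀))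
        (h3 : pq' ≠ (p₀, q₀)) (h4 : pq' ≠ (p₀ + 1, q₀)),
        (¬ ∃ i' j : ℕ, 1 ≤ i' ∧ 1 ≤ j ∧ i = i' + j ∧
            pq = (p₀ + (j : ℤ), q₀ - (j : ℤ)) ∧
            pq' = (p₀ - (i' : ℤ) + 1, q₀ + (i' : ℤ))) →
        entryMap R M' (d' i) pq pq' = (nel pq' h3 h4).symm.toLinearMap ∘ₗ
          entryMap R M (d i) pq pq' ∘ₗ (nel pq h1 h2).toLinearMap) ∧
      -- (C) components out of the new node `D₀`: `ε_{i0} − γᵢ φ⁻¹ δ₀`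
      (∀ i : ℕ, 1 ≤ i →
        ∀ (h3 : ((p₀ - (i : ℤ) + 1, q₀ + (i : ℤ)) : ℤ × ℤ) ≠ (p₀, q₀))
          (h4 : ((p₀ - (i : ℤ) + 1, q₀ + (i : ℤ)) : ℤ × ℤ) ≠ (p₀ + 1, q₀)),
        entryMap R M' (d' i) (p₀, q₀) (p₀ - (i : ℤ) + 1, q₀ + (i : ℤ))
          = (nel _ h3 h4).symm.toLinearMap ∘ₗ
              (epsOut R M p₀ q₀ b₁ D₀ e₁ d i
                - gam R M p₀ q₀ b₁ D₀ e₁ d i ∘ₗ φe.symm.toLinearMap ∘ₗ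
                    del0 R M p₀ q₀ b₁ D₀ b₂ E₀ e₁ e₂ d) ∘ₗ n₁.toLinearMap) ∧
      -- (D) components into the new node `E₀`: `ε_{0j} − γ₀ φ⁻¹ δⱼ`
      (∀ j : ℕ, 1 ≤ j →
        ∀ (h1 : ((p₀ + (j : ℤ), q₀ - (j : ℤ)) : ℤ × ℤ) ≠ (p₀, q₀))
          (h2 : ((p₀ + (j : ℤ), q₀ - (j : ℤ)) : ℤ × ℤ) ≠ (p₀ + 1, q₀)),
        n₂.toLinearMap ∘ₗ
            entryMap R M' (d' j) (p₀ + (j : ℤ), q₀ - (j : ℤ)) (p₀ + 1, q₀)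
          = (epsIn R M p₀ q₀ b₂ E₀ e₂ d j
              - gam0 R M p₀ q₀ b₁ D₀ b₂ E₀ e₁ e₂ d ∘ₗ φe.symm.toLinearMap ∘ₗ
                  del R M p₀ q₀ b₂ E₀ e₂ d j) ∘ₗ (nel _ h1 h2).toLinearMap) ∧
      -- (E) components into the new node `D₀` are the truncations `βⱼ`
      (∀ j : ℕ, 1 ≤ j →
        ∀ (h1 : ((p₀ + (j : ℤ) - 1, q₀ - (j : ℤ)) : ℤ × ℤ) ≠ (p₀, q₀))
          (h2 : ((p₀ + (j : ℤ) - 1, q₀ - (j : ℤ)) : ℤ × ℤ) ≠ (p₀ + 1, q₀)),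
        n₁.toLinearMap ∘ₗ
            entryMap R M' (d' j) (p₀ + (j : ℤ) - 1, q₀ - (j : ℤ)) (p₀, q₀)
          = beta R M p₀ q₀ b₁ D₀ e₁ d j ∘ₗ (nel _ h1 h2).toLinearMap) ∧
      -- (F) components out of the new node `E₀` are the truncations `νᵢ`
      (∀ i : ℕ,
        ∀ (h3 : ((p₀ + 1 - (i : ℤ) + 1, q₀ + (i : ℤ)) : ℤ × ℤ) ≠ (p₀, q₀))
          (h4 : ((p₀ + 1 - (i : ℤ) + 1, q₀ + (i : ℤ)) : ℤ × ℤ) ≠ (p₀ + 1, q₀)),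
        entryMap R M' (d' i) (p₀ + 1, q₀) (p₀ + 1 - (i : ℤ) + 1, q₀ + (i : ℤ))
          = (nel _ h3 h4).symm.toLinearMap ∘ₗ
              nu R M p₀ q₀ b₂ E₀ e₂ d i ∘ₗ n₂.toLinearMap) ∧
      -- (G) the `D₀ → E₀` component of `d'⁰` is `ε₀₀ − γ₀ φ⁻¹ δ₀`
      (n₂.toLinearMap ∘ₗ entryMap R M' (d' 0) (p₀, q₀) (p₀ + 1, q₀) ∘ₗ
          n₁.symm.toLinearMap
        = eps00 R M p₀ q₀ b₁ D₀ b₂ E₀ e₁ e₂ d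
            - gam0 R M p₀ q₀ b₁ D₀ b₂ E₀ e₁ e₂ d ∘ₗ φe.symm.toLinearMap ∘ₗ
                del0 R M p₀ q₀ b₁ D₀ b₂ E₀ e₁ e₂ d) ∧
      -- `(M', d')` is again a perturbed double complex:
      (∀ (i : ℕ) (p q : ℤ) (x : M' (p, q)),
        d' i (DirectSum.lof R (ℤ × ℤ) M' (p, q) x) ∈
          LinearMap.range (DirectSum.lof R (ℤ × ℤ) M' (p - (i : ℤ) + 1, q + (i : ℤ)))) ∧
      (∀ pq : ℤ × ℤ, ∃ N : ℕ, ∀ i ≥ N, ∀ x : M' pq,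
        d' i (DirectSum.lof R (ℤ × ℤ) M' pq x) = 0) ∧
      (∀ k : ℕ, ∑ i ∈ Finset.range (k + 1), d' i ∘ₗ d' (k - i) = 0) ∧
      -- and its total complex is homotopy equivalent to `Tot Ω`:
      ∃ (Dtot : Module.End R (⨁ pq, M pq)) (Dtot' : Module.End R (⨁ pq, M' pq)),
        (∀ (pq : ℤ × ℤ) (x : M pq), ∃ N : ℕ, ∀ N' ≥ N,
          Dtot (DirectSum.lof R (ℤ × ℤ) M pq x)
            = ∑ i ∈ Finset.range N', d i (DirectSum.lof R (ℤ × ℤ) M pq x)) ∧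
        (∀ (pq : ℤ × ℤ) (x : M' pq), ∃ N : ℕ, ∀ N' ≥ N,
          Dtot' (DirectSum.lof R (ℤ × ℤ) M' pq x)
            = ∑ i ∈ Finset.range N', d' i (DirectSum.lof R (ℤ × ℤ) M' pq x)) ∧
        ∃ (f : (⨁ pq, M pq) →ₗ[R] ⨁ pq, M' pq)
          (g : (⨁ pq, M' pq) →ₗ[R] ⨁ pq, M pq)
          (h : Module.End R (⨁ pq, M pq)) (h' : Module.End R (⨁ pq, M' pq)),
          f ∘ₗ Dtot = Dtot' ∘ₗ f ∧ g ∘ₗ Dtot' = Dtot ∘ₗ g ∧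
          g ∘ₗ f - LinearMap.id = Dtot ∘ₗ h + h ∘ₗ Dtot ∧
          f ∘ₗ g - LinearMap.id = Dtot' ∘ₗ h' + h' ∘ₗ Dtot' := by
  classical
  choose N hvan0 using hbd
  have hvan : ∀ pq : ℤ × ℤ, ∀ i : ℕ, N pq ≤ i → ∀ x : M pq,
      d i (DirectSum.lof R (ℤ × ℤ) M pq x) = 0 := fun pq i hi x => hvan0 pq i hi x
  have htot : ∀ (pq : ℤ × ℤ) (x : M pq) (N' : ℕ), N pq ≤ N' →
      GaussAux.DtotOf d N (DirectSum.lof R (ℤ × ℤ) M pq x)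
        = ∑ i ∈ Finset.range N', d i (DirectSum.lof R (ℤ × ℤ) M pq x) :=
    fun pq x N' h => GaussAux.DtotOf_lof hvan pq x h
  have hφD : GaussAux.p2 e₂ ∘ₗ GaussAux.DtotOf d N ∘ₗ GaussAux.i1 e₁ = φe.toLinearMap :=
    GaussAux.p2_Dt_i1 e₁ e₂ φe d hgr hvan hφ
  have hsq : GaussAux.DtotOf d N ∘ₗ GaussAux.DtotOf d N = 0 :=
    GaussAux.Dt_sq_zero hvan hgr htot hcomp
  refine ⟨fun k => GaussAux.dNew e₁ e₂ n₁ n₂ nel φe d k,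
    ?_, ?_, ?_, ?_, ?_, ?_, ?_, ?_, ?_, ?_, ?_⟩
  -- (A)
  · intro i' j hi' hj h1 h2 h3 h4
    have hz : ∑ a ∈ Finset.range (i' + j + 1),
        entryMap R M' (GaussAux.corr e₁ e₂ n₁ n₂ nel φe d a (i' + j - a))
          (p₀ + (j : ℤ), q₀ - (j : ℤ)) (p₀ - (i' : ℤ) + 1, q₀ + (i' : ℤ))
        = entryMap R M' (GaussAux.corr e₁ e₂ n₁ n₂ nel φe d i' j)
          (p₀ + (j : ℤ), q₀ - (j : ℤ)) (p₀ - (i' : ℤ) + 1, q₀ + (i' : ℤ)) := by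
      rw [Finset.sum_eq_single i']
      · rw [Nat.add_sub_cancel_left]
      · intro a ha hne
        refine GaussAux.entry_corr_tgt_zero e₁ e₂ n₁ n₂ nel φe d hgr a _ _ _ ?_
        intro hEq
        rw [Prod.mk.injEq] at hEq
        exact hne (by omega)
      · intro h
        exact absurd (Finset.mem_range.mpr (by omega)) h
    rw [GaussAux.entry_dNew, hz, GaussAux.entry_main, GaussAux.entry_corr,
      GaussAux.piSlot_nel e₁ e₂ n₁ n₂ nel _ h3 h4,
      GaussAux.iotaSlot_nel e₁ e₂ n₁ n₂ nel _ h1 h2]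
    apply LinearMap.ext; intro x
    simp only [gam, del, entryMap, LinearMap.comp_apply, LinearMap.sub_apply, map_sub,
      LinearEquiv.coe_coe, LinearMap.inl_apply, LinearMap.fst_apply]
  -- (B)
  · intro i pq pq' h1 h2 h3 h4 hnc
    obtain ⟨pa, qa⟩ := pq
    obtain ⟨pb, qb⟩ := pq'
    have hz : ∑ a ∈ Finset.range (i + 1),
        entryMap R M' (GaussAux.corr e₁ e₂ n₁ n₂ nel φe d a (i - a))
          (pa, qa) (pb, qb) = 0 := by
      refine Finset.sum_eq_zero fun a ha => ?_
      rw [Finset.mem_range] at ha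
      by_cases hsb : ((pa, qa) : ℤ × ℤ) = (p₀ + ((i - a : ℕ) : ℤ), q₀ - ((i - a : ℕ) : ℤ))
      · by_cases hta : ((pb, qb) : ℤ × ℤ) = (p₀ - (a : ℤ) + 1, q₀ + (a : ℤ))
        · exfalso
          refine hnc ⟨a, i - a, ?_, ?_, by omega, hsb, hta⟩
          · rcases Nat.eq_zero_or_pos a with rfl | h
            · exfalso
              apply h4
              rw [hta, Prod.mk.injEq]
              constructor <;> omega
            · exact h
          · rcases Nat.eq_zero_or_pos (i - a) with he | h
            · exfalso
              apply h1
              rw [hsb, he, Prod.mk.injEq]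
              constructor <;> omega
            · exact h
        · exact GaussAux.entry_corr_tgt_zero e₁ e₂ n₁ n₂ nel φe d hgr a (i - a) _ _ hta
      · exact GaussAux.entry_corr_src_zero e₁ e₂ n₁ n₂ nel φe d hgr a (i - a) pa qa hsb _
    rw [GaussAux.entry_dNew, hz, sub_zero, GaussAux.entry_main,
      GaussAux.piSlot_nel e₁ e₂ n₁ n₂ nel _ h3 h4,
      GaussAux.iotaSlot_nel e₁ e₂ n₁ n₂ nel _ h1 h2]
  -- (C)
  · intro i hi h3 h4
    have hz : ∑ a ∈ Finset.range (i + 1),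
        entryMap R M' (GaussAux.corr e₁ e₂ n₁ n₂ nel φe d a (i - a))
          (p₀, q₀) (p₀ - (i : ℤ) + 1, q₀ + (i : ℤ))
        = entryMap R M' (GaussAux.corr e₁ e₂ n₁ n₂ nel φe d i 0)
          (p₀, q₀) (p₀ - (i : ℤ) + 1, q₀ + (i : ℤ)) := by
      rw [Finset.sum_eq_single i]
      · rw [Nat.sub_self]
      · intro a ha hne
        rw [Finset.mem_range] at ha
        refine GaussAux.entry_corr_src_zero e₁ e₂ n₁ n₂ nel φe d hgr a (i - a) p₀ q₀ ?_ _
        intro hEq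
        rw [Prod.mk.injEq] at hEq
        exact hne (by omega)
      · intro h
        exact absurd (Finset.mem_range.mpr (by omega)) h
    rw [GaussAux.entry_dNew, hz, GaussAux.entry_main, GaussAux.entry_corr,
      GaussAux.piSlot_nel e₁ e₂ n₁ n₂ nel _ h3 h4, GaussAux.iotaSlot_node1]
    apply LinearMap.ext; intro x
    simp only [epsOut, gam, del0, entryMap, LinearMap.comp_apply, LinearMap.sub_apply,
      map_sub, LinearEquiv.coe_coe, LinearMap.inl_apply, LinearMap.inr_apply,
      LinearMap.fst_apply, LinearMap.snd_apply]
  -- (D)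
  · intro j hj h1 h2
    have hz : ∑ a ∈ Finset.range (j + 1),
        entryMap R M' (GaussAux.corr e₁ e₂ n₁ n₂ nel φe d a (j - a))
          (p₀ + (j : ℤ), q₀ - (j : ℤ)) (p₀ + 1, q₀)
        = entryMap R M' (GaussAux.corr e₁ e₂ n₁ n₂ nel φe d 0 j)
          (p₀ + (j : ℤ), q₀ - (j : ℤ)) (p₀ + 1, q₀) := by
      rw [Finset.sum_eq_single 0]
      · rw [Nat.sub_zero]
      · intro a ha hne
        refine GaussAux.entry_corr_tgt_zero e₁ e₂ n₁ n₂ nel φe d hgr a _ _ _ ?_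
        intro hEq
        rw [Prod.mk.injEq] at hEq
        exact hne (by omega)
      · intro h
        exact absurd (Finset.mem_range.mpr (by omega)) h
    rw [GaussAux.entry_dNew, hz, GaussAux.entry_main, GaussAux.entry_corr,
      GaussAux.piSlot_node2, GaussAux.iotaSlot_nel e₁ e₂ n₁ n₂ nel _ h1 h2]
    apply LinearMap.ext; intro x
    simp only [epsIn, gam0, del, entryMap, LinearMap.comp_apply, LinearMap.sub_apply,
      map_sub, LinearEquiv.coe_coe, LinearMap.inl_apply, LinearMap.fst_apply,
      LinearMap.snd_apply, LinearEquiv.apply_symm_apply]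
  -- (E)
  · intro j hj h1 h2
    have hz : ∑ a ∈ Finset.range (j + 1),
        entryMap R M' (GaussAux.corr e₁ e₂ n₁ n₂ nel φe d a (j - a))
          (p₀ + (j : ℤ) - 1, q₀ - (j : ℤ)) (p₀, q₀) = 0 := by
      refine Finset.sum_eq_zero fun a ha => ?_
      refine GaussAux.entry_corr_tgt_zero e₁ e₂ n₁ n₂ nel φe d hgr a _ _ _ ?_
      intro hEq
      rw [Prod.mk.injEq] at hEq
      omega
    rw [GaussAux.entry_dNew, hz, sub_zero, GaussAux.entry_main, GaussAux.piSlot_node1,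
      GaussAux.iotaSlot_nel e₁ e₂ n₁ n₂ nel _ h1 h2]
    apply LinearMap.ext; intro x
    simp only [beta, entryMap, LinearMap.comp_apply, LinearEquiv.coe_coe,
      LinearMap.snd_apply, LinearEquiv.apply_symm_apply]
  -- (F)
  · intro i h3 h4
    have hz : ∑ a ∈ Finset.range (i + 1),
        entryMap R M' (GaussAux.corr e₁ e₂ n₁ n₂ nel φe d a (i - a))
          (p₀ + 1, q₀) (p₀ + 1 - (i : ℤ) + 1, q₀ + (i : ℤ)) = 0 := by
      refine Finset.sum_eq_zero fun a ha => ?_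
      refine GaussAux.entry_corr_src_zero e₁ e₂ n₁ n₂ nel φe d hgr a (i - a)
        (p₀ + 1) q₀ ?_ _
      intro hEq
      rw [Prod.mk.injEq] at hEq
      omega
    rw [GaussAux.entry_dNew, hz, sub_zero, GaussAux.entry_main, GaussAux.iotaSlot_node2,
      GaussAux.piSlot_nel e₁ e₂ n₁ n₂ nel _ h3 h4]
    apply LinearMap.ext; intro x
    simp only [nu, entryMap, LinearMap.comp_apply, LinearEquiv.coe_coe,
      LinearMap.inr_apply]
  -- (G)
  · have hz : ∑ a ∈ Finset.range (0 + 1),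
        entryMap R M' (GaussAux.corr e₁ e₂ n₁ n₂ nel φe d a (0 - a))
          (p₀, q₀) (p₀ + 1, q₀)
        = entryMap R M' (GaussAux.corr e₁ e₂ n₁ n₂ nel φe d 0 0)
          (p₀, q₀) (p₀ + 1, q₀) := by
      rw [Finset.range_one, Finset.sum_singleton]
    rw [GaussAux.entry_dNew, hz, GaussAux.entry_main, GaussAux.entry_corr,
      GaussAux.piSlot_node2, GaussAux.iotaSlot_node1]
    apply LinearMap.ext; intro x
    simp only [eps00, gam0, del0, entryMap, LinearMap.comp_apply, LinearMap.sub_apply,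
      map_sub, LinearEquiv.coe_coe, LinearMap.inl_apply, LinearMap.inr_apply,
      LinearMap.fst_apply, LinearMap.snd_apply, LinearEquiv.apply_symm_apply]
  -- grading
  · exact fun i p q x => GaussAux.dNew_grade e₁ e₂ n₁ n₂ nel φe d hgr i p q x
  -- boundedness
  · exact fun pq => ⟨N pq + N (p₀, q₀), fun i hi x =>
      GaussAux.dNew_van e₁ e₂ n₁ n₂ nel φe d hvan pq i hi x⟩
  -- hcomp'
  · have htot' : ∀ (pq : ℤ × ℤ) (x : M' pq) (N' : ℕ), N pq + N (p₀, q₀) ≤ N' →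
        (GaussAux.fmap e₁ e₂ n₁ n₂ nel φe (GaussAux.DtotOf d N) ∘ₗ
          GaussAux.DtotOf d N ∘ₗ GaussAux.gmap e₁ e₂ n₁ n₂ nel φe (GaussAux.DtotOf d N))
          (DirectSum.lof R (ℤ × ℤ) M' pq x)
          = ∑ k ∈ Finset.range N', GaussAux.dNew e₁ e₂ n₁ n₂ nel φe d k
              (DirectSum.lof R (ℤ × ℤ) M' pq x) := by
      intro pq x N' h
      simpa using GaussAux.DtNew_lof e₁ e₂ n₁ n₂ nel φe d hgr hvan hφ pq x h
    have hsq' : (GaussAux.fmap e₁ e₂ n₁ n₂ nel φe (GaussAux.DtotOf d N) ∘ₗ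
          GaussAux.DtotOf d N ∘ₗ GaussAux.gmap e₁ e₂ n₁ n₂ nel φe (GaussAux.DtotOf d N)) ∘ₗ
        (GaussAux.fmap e₁ e₂ n₁ n₂ nel φe (GaussAux.DtotOf d N) ∘ₗ
          GaussAux.DtotOf d N ∘ₗ GaussAux.gmap e₁ e₂ n₁ n₂ nel φe (GaussAux.DtotOf d N)) = 0 := by
      apply LinearMap.ext; intro y
      simp only [LinearMap.comp_apply, LinearMap.zero_apply]
      rw [GaussAux.gf_eq e₁ e₂ n₁ n₂ nel φe hφD hsq,
        ← GaussAux.piT_D e₁ e₂ φe hsq]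
      simp only [GaussAux.hD2' hsq, map_zero]
    exact fun k => GaussAux.sq_of_Dt
      (fun pq i hi x => GaussAux.dNew_van e₁ e₂ n₁ n₂ nel φe d hvan pq i hi x)
      (fun i p q x => GaussAux.dNew_grade e₁ e₂ n₁ n₂ nel φe d hgr i p q x)
      (fun pq x N' h => htot' pq x N' h) hsq' k
  -- homotopy equivalence
  · refine ⟨GaussAux.DtotOf d N,
      GaussAux.fmap e₁ e₂ n₁ n₂ nel φe (GaussAux.DtotOf d N) ∘ₗ
        GaussAux.DtotOf d N ∘ₗ GaussAux.gmap e₁ e₂ n₁ n₂ nel φe (GaussAux.DtotOf d N),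
      fun pq x => ⟨N pq, fun N' h => htot pq x N' h⟩,
      fun pq x => ⟨N pq + N (p₀, q₀), fun N' h => by
        simpa using GaussAux.DtNew_lof e₁ e₂ n₁ n₂ nel φe d hgr hvan hφ pq x h⟩,
      GaussAux.fmap e₁ e₂ n₁ n₂ nel φe (GaussAux.DtotOf d N),
      GaussAux.gmap e₁ e₂ n₁ n₂ nel φe (GaussAux.DtotOf d N),
      -(GaussAux.hmap e₁ e₂ φe), 0, ?_, ?_, ?_, ?_⟩
    · apply LinearMap.ext; intro y
      simp only [LinearMap.comp_apply]
      rw [GaussAux.gf_eq e₁ e₂ n₁ n₂ nel φe hφD hsq,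
        ← GaussAux.piT_D e₁ e₂ φe hsq]
      have hfπ : ∀ z, GaussAux.fmap e₁ e₂ n₁ n₂ nel φe (GaussAux.DtotOf d N)
          (GaussAux.piT e₁ e₂ φe (GaussAux.DtotOf d N) z)
          = GaussAux.fmap e₁ e₂ n₁ n₂ nel φe (GaussAux.DtotOf d N) z := by
        intro z
        simp only [GaussAux.fmap, LinearMap.comp_apply]
        rw [GaussAux.piT_piT e₁ e₂ φe hφD hsq]
      rw [hfπ]
    · apply LinearMap.ext; intro y
      simp only [LinearMap.comp_apply]
      rw [GaussAux.gf_eq e₁ e₂ n₁ n₂ nel φe hφD hsq, GaussAux.piT_D e₁ e₂ φe hsq]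
      have hπg : ∀ z, GaussAux.piT e₁ e₂ φe (GaussAux.DtotOf d N)
          (GaussAux.gmap e₁ e₂ n₁ n₂ nel φe (GaussAux.DtotOf d N) z)
          = GaussAux.gmap e₁ e₂ n₁ n₂ nel φe (GaussAux.DtotOf d N) z := by
        intro z
        simp only [GaussAux.gmap, LinearMap.comp_apply]
        rw [GaussAux.piT_piT e₁ e₂ φe hφD hsq]
      rw [hπg]
    · apply LinearMap.ext; intro y
      simp only [LinearMap.comp_apply, LinearMap.sub_apply, LinearMap.add_apply,
        LinearMap.id_apply, LinearMap.neg_apply, map_neg]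
      rw [GaussAux.gf_eq e₁ e₂ n₁ n₂ nel φe hφD hsq]
      simp only [GaussAux.piT, LinearMap.sub_apply, LinearMap.comp_apply,
        LinearMap.id_apply]
      abel
    · apply LinearMap.ext; intro y
      simp only [LinearMap.comp_apply, LinearMap.sub_apply, LinearMap.add_apply,
        LinearMap.id_apply, LinearMap.zero_apply, map_zero, add_zero, sub_self]
      rw [GaussAux.fg_eq e₁ e₂ n₁ n₂ nel φe hφD hsq]
      simp
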